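/- Let Y and Z be real Banach spaces and D : S(Y*) → S(Z*) a map between their dual unit spheres. Then the function p on Y × Z defined by p(y,z) = sup{ |y*(y) − (D y*)(z)| : y* ∈ S(Y*) } is a seminorm on the direct sum Y ⊕ Z; moreover p(y,0) = ‖y‖ for all y ∈ Y, and if D is surjective then p(0,z) = ‖z‖ for all z ∈ Z. -/

import Mathlib

/-- Given Banach spaces Y, Z and a map D taking the dual unit sphere
S(Y*) into S(Z*), the function p(y,z) = sup{|y*(y) − (Dy*)(z)| : y* ∈ S(Y*)} is a
seminorm on Y × Z; moreover p(y,0) = ‖y‖, and if D maps S(Y*) onto S(Z*) then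
p(0,z) = ‖z‖. -/
theorem stmt_12 {Y Z : Type*}
    [NormedAddCommGroup Y] [NormedSpace ℝ Y] [CompleteSpace Y]
    [NormedAddCommGroup Z] [NormedSpace ℝ Z] [CompleteSpace Z]
    (D : (Y →L[ℝ] ℝ) → (Z →L[ℝ] ℝ)) (hD : ∀ g : Y →L[ℝ] ℝ, ‖g‖ = 1 → ‖D g‖ = 1)
    (p : Y × Z → ℝ)
    (hp : ∀ v : Y × Z,
      p v = sSup {t : ℝ | ∃ g : Y →L[ℝ] ℝ, ‖g‖ = 1 ∧ t = |g v.1 - (D g) v.2|}) :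
    (∀ v w : Y × Z, p (v + w) ≤ p v + p w) ∧
    (∀ (c : ℝ) (v : Y × Z), p (c • v) = |c| * p v) ∧
    (∀ y : Y, p (y, 0) = ‖y‖) ∧
    ((∀ h : Z →L[ℝ] ℝ, ‖h‖ = 1 → ∃ g : Y →L[ℝ] ℝ, ‖g‖ = 1 ∧ D g = h) →
      ∀ z : Z, p (0, z) = ‖z‖) := by
  set SS : Y × Z → Set ℝ :=
    fun v => {t : ℝ | ∃ g : Y →L[ℝ] ℝ, ‖g‖ = 1 ∧ t = |g v.1 - (D g) v.2|} with hSS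
  have hbdd : ∀ v, BddAbove (SS v) := by
    intro v
    refine ⟨‖v.1‖ + ‖v.2‖, ?_⟩
    rintro t ⟨g, hg, rfl⟩
    calc |g v.1 - D g v.2| ≤ |g v.1| + |D g v.2| := abs_sub _ _
      _ ≤ ‖g‖ * ‖v.1‖ + ‖D g‖ * ‖v.2‖ := by
          gcongr
          · exact g.le_opNorm v.1
          · exact (D g).le_opNorm v.2
      _ = ‖v.1‖ + ‖v.2‖ := by rw [hg, hD g hg]; ring
  have hmem : ∀ (v : Y × Z) (g : Y →L[ℝ] ℝ), ‖g‖ = 1 →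
      |g v.1 - D g v.2| ≤ p v := by
    intro v g hg
    rw [hp]
    exact le_csSup (hbdd v) ⟨g, hg, rfl⟩
  have hnn : ∀ v, 0 ≤ p v := by
    intro v
    rw [hp]
    exact Real.sSup_nonneg (by rintro t ⟨g, hg, rfl⟩; exact abs_nonneg _)
  refine ⟨?_, ?_, ?_, ?_⟩
  · intro v w
    rw [hp]
    apply Real.sSup_le
    · rintro t ⟨g, hg, rfl⟩
      have : |g (v + w).1 - D g (v + w).2|
          ≤ |g v.1 - D g v.2| + |g w.1 - D g w.2| := by
        have : g (v + w).1 - D g (v + w).2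
            = (g v.1 - D g v.2) + (g w.1 - D g w.2) := by
          simp [Prod.fst_add, Prod.snd_add, map_add]; ring
        rw [this]; exact abs_add_le _ _
      exact this.trans (add_le_add (hmem v g hg) (hmem w g hg))
    · exact add_nonneg (hnn v) (hnn w)
  · intro c v
    rcases eq_or_ne c 0 with rfl | hc
    · simp only [zero_smul, abs_zero, zero_mul]
      rw [hp]
      apply le_antisymm
      · apply Real.sSup_le
        · rintro t ⟨g, hg, rfl⟩; simp
        · exact le_refl 0
      · exact Real.sSup_nonneg (by rintro t ⟨g, hg, rfl⟩; exact abs_nonneg _)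
    · have key : ∀ (g : Y →L[ℝ] ℝ),
          |g (c • v).1 - D g (c • v).2| = |c| * |g v.1 - D g v.2| := by
        intro g
        have : g (c • v).1 - D g (c • v).2 = c * (g v.1 - D g v.2) := by
          simp [Prod.smul_fst, Prod.smul_snd, map_smul, smul_eq_mul]; ring
        rw [this, abs_mul]
      apply le_antisymm
      · rw [hp]
        apply Real.sSup_le
        · rintro t ⟨g, hg, rfl⟩
          rw [key g]
          exact mul_le_mul_of_nonneg_left (hmem v g hg) (abs_nonneg c)
        · exact mul_nonneg (abs_nonneg c) (hnn v)
      · rw [mul_comm, ← le_div_iff₀ (abs_pos.mpr hc), hp]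
        apply Real.sSup_le
        · rintro t ⟨g, hg, rfl⟩
          rw [le_div_iff₀ (abs_pos.mpr hc), mul_comm, ← key g]
          exact hmem (c • v) g hg
        · exact div_nonneg (hnn (c • v)) (abs_nonneg c)
  · intro y
    apply le_antisymm
    · rw [hp]
      apply Real.sSup_le
      · rintro t ⟨g, hg, rfl⟩
        simp only [map_zero, sub_zero]
        calc |g y| ≤ ‖g‖ * ‖y‖ := g.le_opNorm y
          _ = ‖y‖ := by rw [hg, one_mul]
      · exact norm_nonneg y
    · rcases eq_or_ne y 0 with rfl | hy
      · simpa using hnn (0, 0)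
      · obtain ⟨g, hg, hgy⟩ := exists_dual_vector ℝ y (norm_ne_zero_iff.mpr hy)
        have := hmem (y, (0 : Z)) g hg
        simp only [map_zero, sub_zero] at this
        calc ‖y‖ = |g y| := by rw [hgy]; simp [abs_of_nonneg (norm_nonneg y)]
          _ ≤ p (y, 0) := this
  · intro hsurj z
    apply le_antisymm
    · rw [hp]
      apply Real.sSup_le
      · rintro t ⟨g, hg, rfl⟩
        simp only [map_zero, zero_sub, abs_neg]
        calc |D g z| ≤ ‖D g‖ * ‖z‖ := (D g).le_opNorm z
          _ = ‖z‖ := by rw [hD g hg, one_mul]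
      · exact norm_nonneg z
    · rcases eq_or_ne z 0 with rfl | hz
      · simpa using hnn (0, 0)
      · obtain ⟨h, hh, hhz⟩ := exists_dual_vector ℝ z (norm_ne_zero_iff.mpr hz)
        obtain ⟨g, hg, hDg⟩ := hsurj h hh
        have := hmem ((0 : Y), z) g hg
        simp only [map_zero, zero_sub, abs_neg, hDg] at this
        calc ‖z‖ = |h z| := by rw [hhz]; simp [abs_of_nonneg (norm_nonneg z)]
          _ ≤ p (0, z) := this
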